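/- A reduced commutative ring whose classical quotient ring is Kasch has only finitely many minimal prime ideals. -/

import Mathlib

def IsKasch (R : Type*) [CommRing R] : Prop :=
  ∀ M : Ideal R, M.IsMaximal → ∃ x : R, x ≠ 0 ∧ ∀ y ∈ M, y * x = 0

/-- In a reduced commutative ring, every minimal prime is disjoint from the
non-zero-divisors. -/
lemma minimalPrimes_disjoint_nonZeroDivisors {R : Type*} [CommRing R] [IsReduced R]
    {p : Ideal R} (hp : p ∈ minimalPrimes R) :
    Disjoint (nonZeroDivisors R : Set R) (p : Set R) := by
  rw [Set.disjoint_right]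
  intro x hxp hx
  have hpprime : p.IsPrime := hp.1.1
  set S : Submonoid R := p.primeCompl ⊔ Submonoid.powers x with hS
  have h0 : (0 : R) ∈ S := by
    by_contra h0
    have hdisj : Disjoint ((⊥ : Ideal R) : Set R) (S : Set R) := by
      rw [Set.disjoint_left]
      rintro y hy
      rw [SetLike.mem_coe, Ideal.mem_bot] at hy
      subst hy; exact h0
    obtain ⟨q, hq, -, hqS⟩ := Ideal.exists_le_prime_disjoint ⊥ S hdisj
    have hqp : q ≤ p := by
      intro y hy
      by_contra hyp
      exact Set.disjoint_left.mp hqS hy (Submonoid.mem_sup_left hyp)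
    have : p ≤ q := hp.2 ⟨hq, bot_le⟩ hqp
    exact Set.disjoint_left.mp hqS (this hxp)
      (Submonoid.mem_sup_right (Submonoid.mem_powers x))
  rw [Submonoid.mem_sup] at h0
  obtain ⟨s, hs, z, hz, hsz⟩ := h0
  obtain ⟨n, rfl⟩ := hz
  have hnil : IsNilpotent (x * s) := by
    refine ⟨n + 1, ?_⟩
    have : (x * s) ^ (n + 1) = (s * x ^ n) * (x * s ^ n) := by ring
    rw [this, hsz, zero_mul]
  have hxs : x * s = 0 := hnil.eq_zero
  have : s = 0 := hx.2 s (by rwa [mul_comm] at hxs)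
  exact hs (this ▸ p.zero_mem)

/-- A commutative reduced Kasch ring has finitely many prime ideals, and all of them
are maximal. -/
lemma primes_finite_of_isKasch {Q : Type*} [CommRing Q] [IsReduced Q] (hK : IsKasch Q) :
    {q : Ideal Q | q.IsPrime}.Finite := by
  classical
  -- choose annihilating elements for each maximal ideal
  choose xf hxf0 hxfann using fun M : {M : Ideal Q // M.IsMaximal} => hK M.1 M.2
  -- each chosen element is outside its maximal ideal
  have hxf_not_mem : ∀ M : {M : Ideal Q // M.IsMaximal}, xf M ∉ M.1 := by
    intro M hmem
    have : xf M * xf M = 0 := hxfann M (xf M) hmem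
    exact hxf0 M (IsReduced.eq_zero (xf M) ⟨2, by rw [pow_two]; exact this⟩)
  -- the span of all chosen elements is the whole ring
  have hspan : Ideal.span (Set.range xf) = ⊤ := by
    by_contra hne
    obtain ⟨M, hM, hle⟩ := Ideal.exists_le_maximal _ hne
    exact hxf_not_mem ⟨M, hM⟩ (hle (Ideal.subset_span ⟨⟨M, hM⟩, rfl⟩))
  have hone : (1 : Q) ∈ Ideal.span (Set.range xf) := hspan ▸ Submodule.mem_top
  obtain ⟨t, hts, hmem⟩ := Submodule.mem_span_finite_of_mem_span hone
  -- every prime ideal is maximal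
  have hprime_max : ∀ q : Ideal Q, q.IsPrime → q.IsMaximal := by
    intro q hq
    obtain ⟨M, hM, hle⟩ := Ideal.exists_le_maximal q hq.ne_top
    have : M ≤ q := by
      intro y hy
      have h0 : y * xf ⟨M, hM⟩ = 0 := hxfann ⟨M, hM⟩ y hy
      rcases hq.mem_or_mem (h0 ▸ q.zero_mem) with h | h
      · exact h
      · exact absurd (hle h) (hxf_not_mem ⟨M, hM⟩)
    exact (le_antisymm hle this) ▸ hM
  -- the primes are covered by finitely many "annihilated" sets, each a subsingleton
  have hcover : {q : Ideal Q | q.IsPrime} ⊆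
      ⋃ z ∈ t, {M : Ideal Q | M.IsPrime ∧ z ∉ M ∧ ∀ y ∈ M, y * z = 0} := by
    intro q hq
    have hqmax := hprime_max q hq
    -- some element of t is outside q
    have : ∃ z ∈ t, z ∉ q := by
      by_contra hc
      push_neg at hc
      exact hqmax.ne_top (Ideal.eq_top_of_isUnit_mem _
        (Ideal.span_le.mpr (fun z hz => hc z hz) hmem) isUnit_one)
    obtain ⟨z, hzt, hzq⟩ := this
    obtain ⟨N, rfl⟩ := hts hzt
    -- q must equal N
    have hqN : q = N.1 := by
      by_contra hne
      have hnle : ¬ N.1 ≤ q := fun hle2 => hne (N.2.eq_of_le hqmax.ne_top hle2).symm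
      obtain ⟨y, hyN, hyq⟩ := Set.not_subset.mp hnle
      have h0 : y * xf N = 0 := hxfann N y hyN
      rcases hq.mem_or_mem (h0 ▸ q.zero_mem) with h | h
      · exact hyq h
      · exact hzq h
    refine Set.mem_biUnion hzt ?_
    rw [hqN]
    exact ⟨N.2.isPrime, hxf_not_mem N, hxfann N⟩
  refine Set.Finite.subset (Set.Finite.biUnion t.finite_toSet (fun z _ => ?_)) hcover
  -- each annihilated set is a subsingleton (z determines M)
  rcases eq_or_ne z 0 with rfl | hz0
  · refine Set.Finite.subset (Set.finite_empty) ?_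
    rintro M ⟨-, hzM, -⟩
    exact absurd M.zero_mem hzM
  refine Set.Subsingleton.finite ?_
  rintro M₁ ⟨hM₁, hzM₁, hann₁⟩ M₂ ⟨hM₂, hzM₂, hann₂⟩
  -- if M₁ ≠ M₂ we derive a contradiction; first show M₁ ≤ M₂
  have key : ∀ M N : Ideal Q, z ∉ M → (∀ y ∈ N, y * z = 0) → N ≤ M → True := fun _ _ _ _ _ => trivial
  by_contra hne
  have : ¬ (M₁ ≤ M₂) ∨ ¬ (M₂ ≤ M₁) := by
    by_contra hc
    push_neg at hc
    exact hne (le_antisymm hc.1 hc.2)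
  rcases this with hn | hn
  · obtain ⟨y, hy1, hy2⟩ := Set.not_subset.mp hn
    exact hzM₂ (Or.resolve_left (hM₂.mem_or_mem ((hann₁ y hy1) ▸ M₂.zero_mem)) hy2)
  · obtain ⟨y, hy2, hy1⟩ := Set.not_subset.mp hn
    exact hzM₁ (Or.resolve_left (hM₁.mem_or_mem ((hann₂ y hy2) ▸ M₁.zero_mem)) hy1)

theorem stmt6 (R : Type*) [CommRing R] [IsReduced R]
    (h : IsKasch (Localization (nonZeroDivisors R))) :
    (minimalPrimes R).Finite := by
  set Q := Localization (nonZeroDivisors R)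
  have hQfin : {q : Ideal Q | q.IsPrime}.Finite := primes_finite_of_isKasch h
  have hsub : minimalPrimes R ⊆
      (Ideal.comap (algebraMap R Q)) '' {q : Ideal Q | q.IsPrime} := by
    intro p hp
    have hpprime : p.IsPrime := hp.1.1
    have hdisj : Disjoint ((nonZeroDivisors R : Submonoid R) : Set R) (p : Set R) :=
      minimalPrimes_disjoint_nonZeroDivisors hp
    refine ⟨Ideal.map (algebraMap R Q) p, ?_, ?_⟩
    · exact IsLocalization.isPrime_of_isPrime_disjoint (nonZeroDivisors R) Q p hpprime hdisj
    · exact IsLocalization.comap_map_of_isPrime_disjoint (nonZeroDivisors R) Q hpprime hdisj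
  exact Set.Finite.subset (hQfin.image _) hsub
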